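/- Let X be a measurable space, let κ₁ and κ₂ be Markov kernels from X to X, let μ be a probability measure on X, and let δ ≥ 0 be such that for every probability measure ν on X, ‖νκ₁ − νκ₂‖_TV ≤ δ. Define the H-step occupancy measures λ₁ := Σ_{t=0}^{H−1} μκ₁^t and λ₂ := Σ_{t=0}^{H−1} μκ₂^t for H ∈ ℕ. Then ‖λ₁ − λ₂‖_TV ≤ (H(H−1)/2)·δ. -/

import Mathlib

open MeasureTheory ProbabilityTheory

/-- Pushing a finite measure through a Markov kernel yields a finite measure. -/
instance bindIsFiniteMeasure {X : Type*} [MeasurableSpace X] (μ : Measure X)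
    [IsFiniteMeasure μ] (κ : Kernel X X) [IsMarkovKernel κ] :
    IsFiniteMeasure (μ.bind κ) := by
  constructor
  rw [Measure.bind_apply MeasurableSet.univ (Kernel.measurable κ).aemeasurable]
  calc ∫⁻ x, (κ x) Set.univ ∂μ = ∫⁻ _, 1 ∂μ := by simp
    _ = μ Set.univ := by simp
    _ < ⊤ := measure_lt_top μ _

/-- The `t`-fold iterated bind `μ κ^t` of a measure `μ` along a kernel `κ`:
`μκ^0 = μ` and `μκ^(t+1) = (μκ^t)κ`. -/
noncomputable def iterBind {X : Type*} [MeasurableSpace X] (μ : Measure X)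
    (κ : Kernel X X) : ℕ → Measure X
  | 0 => μ
  | t + 1 => (iterBind μ κ t).bind κ

instance iterBindIsFiniteMeasure {X : Type*} [MeasurableSpace X] (μ : Measure X)
    [IsFiniteMeasure μ] (κ : Kernel X X) [IsMarkovKernel κ] (t : ℕ) :
    IsFiniteMeasure (iterBind μ κ t) := by
  induction t with
  | zero => exact inferInstanceAs (IsFiniteMeasure μ)
  | succ t ih => exact @bindIsFiniteMeasure X _ (iterBind μ κ t) ih κ _

/-- The total variation norm `‖μ − ν‖_TV` of the difference of two finite measures:
the total mass of the total variation of the signed measure `μ − ν`. -/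
noncomputable def tvDist {X : Type*} [MeasurableSpace X] (μ ν : Measure X)
    [IsFiniteMeasure μ] [IsFiniteMeasure ν] : ℝ :=
  ((μ.toSignedMeasure - ν.toSignedMeasure).totalVariation Set.univ).toReal

instance finsetSumIsFiniteMeasure {X : Type*} [MeasurableSpace X] (f : ℕ → Measure X)
    [hf : ∀ t, IsFiniteMeasure (f t)] (H : ℕ) :
    IsFiniteMeasure (∑ t ∈ Finset.range H, f t) := by
  induction H with
  | zero => simpa using inferInstanceAs (IsFiniteMeasure (0 : Measure X))
  | succ H ih =>
      rw [Finset.sum_range_succ]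
      exact @MeasureTheory.isFiniteMeasureAdd X _ _ _ ih (hf H)

section Aux

variable {X : Type*} [MeasurableSpace X]

/-- Bind of a probability measure along a Markov kernel is a probability measure. -/
instance bindIsProbabilityMeasure (μ : Measure X) [IsProbabilityMeasure μ]
    (κ : Kernel X X) [IsMarkovKernel κ] : IsProbabilityMeasure (μ.bind κ) := by
  constructor
  rw [Measure.bind_apply MeasurableSet.univ (Kernel.measurable κ).aemeasurable]
  simp

instance iterBindIsProbabilityMeasure (μ : Measure X) [IsProbabilityMeasure μ]
    (κ : Kernel X X) [IsMarkovKernel κ] (t : ℕ) :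
    IsProbabilityMeasure (iterBind μ κ t) := by
  induction t with
  | zero => exact inferInstanceAs (IsProbabilityMeasure μ)
  | succ t ih => exact @bindIsProbabilityMeasure X _ (iterBind μ κ t) ih κ _

variable (μ ν : Measure X) [IsFiniteMeasure μ] [IsFiniteMeasure ν]

lemma tvDist_eq_parts :
    tvDist μ ν =
      ((μ.toSignedMeasure - ν.toSignedMeasure).toJordanDecomposition.posPart Set.univ).toReal +
      ((μ.toSignedMeasure - ν.toSignedMeasure).toJordanDecomposition.negPart Set.univ).toReal := by
  rw [tvDist, SignedMeasure.totalVariation, Measure.add_apply,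
    ENNReal.toReal_add (measure_ne_top _ _) (measure_ne_top _ _)]

lemma jordan_balance :
    μ + (μ.toSignedMeasure - ν.toSignedMeasure).toJordanDecomposition.negPart =
    ν + (μ.toSignedMeasure - ν.toSignedMeasure).toJordanDecomposition.posPart := by
  set s := μ.toSignedMeasure - ν.toSignedMeasure with hs
  have h := s.toSignedMeasure_toJordanDecomposition
  rw [MeasureTheory.JordanDecomposition.toSignedMeasure] at h
  rw [← Measure.toSignedMeasure_eq_toSignedMeasure_iff, Measure.toSignedMeasure_add,
    Measure.toSignedMeasure_add]
  rw [sub_eq_sub_iff_add_eq_add] at h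
  rw [← h]
  exact add_comm _ _

lemma integral_diff_le_tvDist (g : X → ℝ) (hg : Measurable g) (hb : ∀ x, |g x| ≤ 1) :
    ∫ x, g x ∂μ - ∫ x, g x ∂ν ≤ tvDist μ ν := by
  set j := (μ.toSignedMeasure - ν.toSignedMeasure).toJordanDecomposition with hj
  have hint : ∀ (ρ : Measure X) [IsFiniteMeasure ρ], Integrable g ρ := by
    intro ρ _
    refine (integrable_const (1 : ℝ)).mono' hg.aestronglyMeasurable ?_
    exact ae_of_all _ fun x => by simpa [Real.norm_eq_abs] using hb x
  have hbal := jordan_balance μ ν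
  have h1 : ∫ x, g x ∂μ + ∫ x, g x ∂j.negPart = ∫ x, g x ∂ν + ∫ x, g x ∂j.posPart := by
    rw [← integral_add_measure (hint μ) (hint j.negPart),
      ← integral_add_measure (hint ν) (hint j.posPart), hbal]
  have h2 : ∫ x, g x ∂j.posPart ≤ (j.posPart Set.univ).toReal := by
    calc ∫ x, g x ∂j.posPart ≤ ∫ _, (1 : ℝ) ∂j.posPart :=
          integral_mono (hint _) (integrable_const 1) (fun x => (abs_le.mp (hb x)).2)
      _ = (j.posPart Set.univ).toReal := by simp; rfl
  have h3 : -(j.negPart Set.univ).toReal ≤ ∫ x, g x ∂j.negPart := by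
    calc -(j.negPart Set.univ).toReal = ∫ _, (-1 : ℝ) ∂j.negPart := by simp; rfl
      _ ≤ ∫ x, g x ∂j.negPart :=
          integral_mono (integrable_const (-1)) (hint _) (fun x => (abs_le.mp (hb x)).1)
  rw [tvDist_eq_parts]
  linarith

lemma set_diff_le_tvDist {i : Set X} (hi : MeasurableSet i) :
    ((μ i).toReal - (ν i).toReal) - ((μ iᶜ).toReal - (ν iᶜ).toReal) ≤ tvDist μ ν := by
  set g : X → ℝ := fun x => 2 * i.indicator (fun _ => (1 : ℝ)) x - 1 with hgdef
  have hg : Measurable g := by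
    apply Measurable.sub _ measurable_const
    exact (measurable_const.indicator hi).const_mul 2
  have hb : ∀ x, |g x| ≤ 1 := by
    intro x
    by_cases hx : x ∈ i <;> simp [hgdef, hx] <;> norm_num
  have hint : ∀ (ρ : Measure X) [IsFiniteMeasure ρ],
      ∫ x, g x ∂ρ = (ρ i).toReal - (ρ iᶜ).toReal := by
    intro ρ _
    have hind : Integrable (i.indicator (fun _ => (1 : ℝ))) ρ :=
      (integrable_const (1 : ℝ)).indicator hi
    rw [hgdef]
    simp only
    rw [integral_sub ((hind.const_mul 2)) (integrable_const 1), integral_const,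
      integral_const_mul, integral_indicator_const _ hi]
    simp only [Measure.real]
    have hit : ρ Set.univ = ρ i + ρ iᶜ := (measure_add_measure_compl hi).symm
    rw [hit, ENNReal.toReal_add (measure_ne_top _ _) (measure_ne_top _ _)]
    simp; ring
  have := integral_diff_le_tvDist μ ν g hg hb
  rw [hint μ, hint ν] at this
  linarith

lemma tvDist_eq_hahn :
    ∃ i : Set X, MeasurableSet i ∧
      tvDist μ ν =
        ((μ i).toReal - (ν i).toReal) - ((μ iᶜ).toReal - (ν iᶜ).toReal) := by
  set s := μ.toSignedMeasure - ν.toSignedMeasure with hs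
  obtain ⟨i, hi₁, hi₂, hi₃, hp, hn⟩ := s.toJordanDecomposition_spec
  refine ⟨i, hi₁, ?_⟩
  have hsapp : ∀ (k : Set X), MeasurableSet k → s k = (μ k).toReal - (ν k).toReal := by
    intro k hk
    rw [hs, MeasureTheory.VectorMeasure.sub_apply,
      Measure.toSignedMeasure_apply_measurable hk, Measure.toSignedMeasure_apply_measurable hk]
    rfl
  have hpuniv : (s.toJordanDecomposition.posPart Set.univ).toReal = s i := by
    rw [hp, SignedMeasure.toMeasureOfZeroLE_apply _ hi₂ hi₁ MeasurableSet.univ]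
    simp
  have hnuniv : (s.toJordanDecomposition.negPart Set.univ).toReal = -s iᶜ := by
    rw [hn, SignedMeasure.toMeasureOfLEZero_apply _ hi₃ hi₁.compl MeasurableSet.univ]
    simp
  rw [tvDist_eq_parts, ← hs, hpuniv, hnuniv, hsapp i hi₁, hsapp iᶜ hi₁.compl]
  ring

lemma tvDist_triangle (ρ : Measure X) [IsFiniteMeasure ρ] :
    tvDist μ ρ ≤ tvDist μ ν + tvDist ν ρ := by
  obtain ⟨i, hi, heq⟩ := tvDist_eq_hahn μ ρ
  have h1 := set_diff_le_tvDist μ ν hi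
  have h2 := set_diff_le_tvDist ν ρ hi
  rw [heq]
  linarith

lemma tvDist_add_le (μ₁ μ₂ ν₁ ν₂ : Measure X) [IsFiniteMeasure μ₁] [IsFiniteMeasure μ₂]
    [IsFiniteMeasure ν₁] [IsFiniteMeasure ν₂] :
    tvDist (μ₁ + μ₂) (ν₁ + ν₂) ≤ tvDist μ₁ ν₁ + tvDist μ₂ ν₂ := by
  obtain ⟨i, hi, heq⟩ := tvDist_eq_hahn (μ₁ + μ₂) (ν₁ + ν₂)
  have h1 := set_diff_le_tvDist μ₁ ν₁ hi
  have h2 := set_diff_le_tvDist μ₂ ν₂ hi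
  rw [heq]
  simp only [Measure.add_apply, ENNReal.toReal_add (measure_ne_top _ _) (measure_ne_top _ _)]
  linarith

lemma tvDist_self : tvDist μ μ = 0 := by
  rw [tvDist]
  simp [MeasureTheory.SignedMeasure.totalVariation_zero]

lemma tvDist_bind_le (κ : Kernel X X) [IsMarkovKernel κ] :
    tvDist (μ.bind κ) (ν.bind κ) ≤ tvDist μ ν := by
  obtain ⟨i, hi, heq⟩ := tvDist_eq_hahn (μ.bind κ) (ν.bind κ)
  set g : X → ℝ := fun x => (κ x i).toReal - (κ x iᶜ).toReal with hgdef
  have hg : Measurable g :=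
    ((Kernel.measurable_coe κ hi).ennreal_toReal).sub
      ((Kernel.measurable_coe κ hi.compl).ennreal_toReal)
  have haux : ∀ (x : X) (k : Set X), (κ x k).toReal ≤ 1 := by
    intro x k
    have h1 : κ x k ≤ 1 := prob_le_one
    simpa using ENNReal.toReal_mono ENNReal.one_ne_top h1
  have hb : ∀ x, |g x| ≤ 1 := by
    intro x
    have h1 := haux x i
    have h2 := haux x iᶜ
    have h3 : 0 ≤ (κ x i).toReal := ENNReal.toReal_nonneg
    have h4 : 0 ≤ (κ x iᶜ).toReal := ENNReal.toReal_nonneg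
    rw [abs_le]; constructor <;> simp [hgdef] <;> linarith
  have hint : ∀ (ρ : Measure X) [IsFiniteMeasure ρ] (k : Set X), MeasurableSet k →
      ∫ x, (κ x k).toReal ∂ρ = ((ρ.bind κ) k).toReal := by
    intro ρ _ k hk
    rw [Measure.bind_apply hk (Kernel.measurable κ).aemeasurable,
      ← integral_toReal ((Kernel.measurable_coe κ hk)).aemeasurable
        (ae_of_all _ fun x => lt_of_le_of_lt prob_le_one ENNReal.one_lt_top)]
  have hginteg : ∀ (ρ : Measure X) [IsFiniteMeasure ρ],
      ∫ x, g x ∂ρ = ((ρ.bind κ) i).toReal - ((ρ.bind κ) iᶜ).toReal := by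
    intro ρ _
    have hI : ∀ k : Set X, MeasurableSet k → Integrable (fun x => (κ x k).toReal) ρ := by
      intro k hk
      refine (integrable_const (1 : ℝ)).mono'
        ((Kernel.measurable_coe κ hk).ennreal_toReal).aestronglyMeasurable ?_
      exact ae_of_all _ fun x => by
        simpa [Real.norm_eq_abs, abs_of_nonneg ENNReal.toReal_nonneg] using haux x k
    rw [hgdef]
    simp only
    rw [integral_sub (hI i hi) (hI iᶜ hi.compl), hint ρ i hi, hint ρ iᶜ hi.compl]
  have := integral_diff_le_tvDist μ ν g hg hb
  rw [hginteg μ, hginteg ν] at this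
  rw [heq]
  linarith

lemma tvDist_congr {μ' ν' : Measure X} [IsFiniteMeasure μ'] [IsFiniteMeasure ν']
    (h1 : μ = μ') (h2 : ν = ν') : tvDist μ ν = tvDist μ' ν' := by
  subst h1; subst h2; rfl

lemma tvDist_sum_le (f g : ℕ → Measure X) [hf : ∀ t, IsFiniteMeasure (f t)]
    [hg : ∀ t, IsFiniteMeasure (g t)] (H : ℕ) :
    tvDist (∑ t ∈ Finset.range H, f t) (∑ t ∈ Finset.range H, g t)
      ≤ ∑ t ∈ Finset.range H, tvDist (f t) (g t) := by
  induction H with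
  | zero =>
      rw [tvDist_congr _ _ (Finset.sum_range_zero f) (Finset.sum_range_zero g)]
      simp [tvDist_self]
  | succ H ih =>
      rw [tvDist_congr _ _ (Finset.sum_range_succ f H) (Finset.sum_range_succ g H),
        Finset.sum_range_succ]
      calc tvDist ((∑ t ∈ Finset.range H, f t) + f H) ((∑ t ∈ Finset.range H, g t) + g H)
          ≤ tvDist (∑ t ∈ Finset.range H, f t) (∑ t ∈ Finset.range H, g t)
            + tvDist (f H) (g H) := tvDist_add_le _ _ _ _
        _ ≤ (∑ t ∈ Finset.range H, tvDist (f t) (g t)) + tvDist (f H) (g H) := by linarith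

end Aux

/-- If the one-step total variation discrepancy between two Markov
kernels `κ₁`, `κ₂` is uniformly bounded by `δ` over all initial probability measures,
then the `H`-step occupancy measures `λᵢ = ∑_{t=0}^{H−1} μκᵢ^t` satisfy
`‖λ₁ − λ₂‖_TV ≤ (H(H−1)/2)·δ`. -/
theorem tvDist_occupancy_le {X : Type*} [MeasurableSpace X]
    (κ₁ κ₂ : Kernel X X) [IsMarkovKernel κ₁] [IsMarkovKernel κ₂]
    (δ : ℝ) (hδ : 0 ≤ δ)
    (hstep : ∀ (ν : Measure X) [IsProbabilityMeasure ν],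
      tvDist (ν.bind κ₁) (ν.bind κ₂) ≤ δ)
    (μ : Measure X) [IsProbabilityMeasure μ] (H : ℕ) :
    tvDist (∑ t ∈ Finset.range H, iterBind μ κ₁ t)
        (∑ t ∈ Finset.range H, iterBind μ κ₂ t)
      ≤ (H * (H - 1) / 2 : ℝ) * δ := by
  have hiter : ∀ t : ℕ, tvDist (iterBind μ κ₁ t) (iterBind μ κ₂ t) ≤ t * δ := by
    intro t
    induction t with
    | zero => simp [iterBind, tvDist_self]
    | succ t ih =>
        have h1 : tvDist ((iterBind μ κ₁ t).bind κ₁) ((iterBind μ κ₂ t).bind κ₁)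
            ≤ tvDist (iterBind μ κ₁ t) (iterBind μ κ₂ t) := tvDist_bind_le _ _ κ₁
        have h2 : tvDist ((iterBind μ κ₂ t).bind κ₁) ((iterBind μ κ₂ t).bind κ₂) ≤ δ :=
          hstep (iterBind μ κ₂ t)
        have h3 := tvDist_triangle ((iterBind μ κ₁ t).bind κ₁)
          ((iterBind μ κ₂ t).bind κ₁) ((iterBind μ κ₂ t).bind κ₂)
        show tvDist ((iterBind μ κ₁ t).bind κ₁) ((iterBind μ κ₂ t).bind κ₂) ≤ _
        push_cast
        linarith
  calc tvDist (∑ t ∈ Finset.range H, iterBind μ κ₁ t) (∑ t ∈ Finset.range H, iterBind μ κ₂ t)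
      ≤ ∑ t ∈ Finset.range H, tvDist (iterBind μ κ₁ t) (iterBind μ κ₂ t) :=
        tvDist_sum_le _ _ H
    _ ≤ ∑ t ∈ Finset.range H, (t : ℝ) * δ := Finset.sum_le_sum fun t _ => hiter t
    _ = (∑ t ∈ Finset.range H, (t : ℝ)) * δ := by rw [Finset.sum_mul]
    _ = (H * (H - 1) / 2 : ℝ) * δ := by
        congr 1
        induction H with
        | zero => simp
        | succ H ihH =>
            rw [Finset.sum_range_succ, ihH]
            push_cast
            ring
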